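/- arXiv:2505.21917 — 2 statements merged into one kernel-verified Lean document; each statement's English description precedes it below -/
import Mathlib

section
/- Let (A,B) be a definite pencil with Crawford number γ(A,B) and let 0 < ε < γ(A,B). Then a complex number z belongs to the symmetric ε-pseudospectrum Λ_ε^sym(A,B) if and only if z is real and σ_min(A − zB) ≤ ε√(1 + |z|²). -/
open Matrix MeasureTheory ProbabilityTheory
open scoped Classical

noncomputable def specNorm {m n : Type*} [Fintype m] [Fintype n] [DecidableEq n]
    (A : Matrix m n ℂ) : ℝ :=
  ‖LinearMap.toContinuousLinearMap (Matrix.toEuclideanLin A)‖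

noncomputable def crawford {n : ℕ} (A B : Matrix (Fin n) (Fin n) ℂ) : ℝ :=
  sInf { r | ∃ x : EuclideanSpace ℂ (Fin n), ‖x‖ = 1 ∧
    r = ‖star (x : Fin n → ℂ) ⬝ᵥ (A + Complex.I • B).mulVec x‖ }

noncomputable def pencilNorm {n : ℕ} (A B : Matrix (Fin n) (Fin n) ℂ) : ℝ :=
  specNorm (Matrix.fromCols A B)

def symPseudo {n : ℕ} (ε : ℝ) (A B : Matrix (Fin n) (Fin n) ℂ) : Set ℂ :=
  { z | ∃ E F : Matrix (Fin n) (Fin n) ℂ, E.IsHermitian ∧ F.IsHermitian ∧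
      Real.sqrt (specNorm E ^ 2 + specNorm F ^ 2) ≤ ε ∧
      ∃ u : Fin n → ℂ, u ≠ 0 ∧ (A + E).mulVec u = z • (B + F).mulVec u }

noncomputable def smin {n : ℕ} (M : Matrix (Fin n) (Fin n) ℂ) : ℝ :=
  sInf { r | ∃ x : EuclideanSpace ℂ (Fin n), ‖x‖ = 1 ∧ r = ‖Matrix.toEuclideanLin M x‖ }

def pencilEigs {n : ℕ} (A B : Matrix (Fin n) (Fin n) ℂ) : Set ℝ :=
  { lam | ∃ u : Fin n → ℂ, u ≠ 0 ∧ A.mulVec u = (lam : ℂ) • B.mulVec u }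

section AuxLemmas

variable {n : ℕ}

variable {n : ℕ}

-- bridge: mulVec as EuclideanSpace map

lemma mulVec_norm_le (M : Matrix (Fin n) (Fin n) ℂ) (v : Fin n → ℂ) :
    ‖(WithLp.equiv 2 (Fin n → ℂ)).symm (M.mulVec v)‖ ≤
      specNorm M * ‖(WithLp.equiv 2 (Fin n → ℂ)).symm v‖ := by
  have := (LinearMap.toContinuousLinearMap (Matrix.toEuclideanLin M)).le_opNorm
    ((WithLp.equiv 2 (Fin n → ℂ)).symm v)
  exact this

lemma specNorm_le_bound (M : Matrix (Fin n) (Fin n) ℂ) (C : ℝ) (hC : 0 ≤ C)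
    (h : ∀ v : Fin n → ℂ, ‖(WithLp.equiv 2 (Fin n → ℂ)).symm (M.mulVec v)‖ ≤
      C * ‖(WithLp.equiv 2 (Fin n → ℂ)).symm v‖) : specNorm M ≤ C := by
  apply ContinuousLinearMap.opNorm_le_bound _ hC
  intro x
  simpa [Matrix.toEuclideanLin_apply] using h ((WithLp.equiv 2 (Fin n → ℂ)) x)

lemma inner_eq_dot (x y : Fin n → ℂ) :
    @inner ℂ _ _ ((WithLp.equiv 2 (Fin n → ℂ)).symm x) ((WithLp.equiv 2 (Fin n → ℂ)).symm y)
      = star x ⬝ᵥ y := by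
  exact (EuclideanSpace.inner_toLp_toLp x y).trans (dotProduct_comm _ _)

noncomputable abbrev eu (x : Fin n → ℂ) : EuclideanSpace ℂ (Fin n) :=
  (WithLp.equiv 2 (Fin n → ℂ)).symm x

lemma herm_quad_real {M : Matrix (Fin n) (Fin n) ℂ} (hM : M.IsHermitian) (x : Fin n → ℂ) :
    star (star x ⬝ᵥ M.mulVec x) = star x ⬝ᵥ M.mulVec x := by
  conv_lhs => rw [← star_dotProduct]
  rw [star_mulVec, hM.eq, dotProduct_mulVec]

lemma quad_abs_le (M : Matrix (Fin n) (Fin n) ℂ) (x : Fin n → ℂ) (hx : ‖eu x‖ = 1) :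
    ‖star x ⬝ᵥ M.mulVec x‖ ≤ specNorm M := by
  have h1 : star x ⬝ᵥ M.mulVec x = @inner ℂ _ _ (eu x) (eu (M.mulVec x)) := by
    rw [inner_eq_dot]
  rw [h1]
  have h2 : ‖eu (M.mulVec x)‖ ≤ specNorm M := by
    have h := mulVec_norm_le M x
    rw [show ‖(WithLp.equiv 2 (Fin n → ℂ)).symm x‖ = (1:ℝ) from hx, mul_one] at h
    exact h
  calc ‖@inner ℂ _ _ (eu x) (eu (M.mulVec x))‖ ≤ ‖eu x‖ * ‖eu (M.mulVec x)‖ :=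
        norm_inner_le_norm _ _
    _ ≤ 1 * specNorm M := by rw [hx]; exact mul_le_mul_of_nonneg_left h2 zero_le_one
    _ = specNorm M := one_mul _

lemma crawford_le (A B : Matrix (Fin n) (Fin n) ℂ) (x : Fin n → ℂ) (hx : ‖eu x‖ = 1) :
    crawford A B ≤ ‖star x ⬝ᵥ (A + Complex.I • B).mulVec x‖ := by
  apply csInf_le
  · exact ⟨0, by rintro r ⟨y, hy, rfl⟩; positivity⟩
  · exact ⟨eu x, hx, rfl⟩

lemma smin_le (M : Matrix (Fin n) (Fin n) ℂ) (x : Fin n → ℂ) (hx : ‖eu x‖ = 1) :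
    smin M ≤ ‖eu (M.mulVec x)‖ := by
  apply csInf_le
  · exact ⟨0, by rintro r ⟨y, hy, rfl⟩; positivity⟩
  · exact ⟨eu x, hx, rfl⟩

lemma smin_exists (hn : 0 < n) (M : Matrix (Fin n) (Fin n) ℂ) :
    ∃ x : Fin n → ℂ, ‖eu x‖ = 1 ∧ ‖eu (M.mulVec x)‖ = smin M := by
  have hne : (Metric.sphere (0 : EuclideanSpace ℂ (Fin n)) 1).Nonempty := by
    refine ⟨EuclideanSpace.single ⟨0, hn⟩ (1 : ℂ), ?_⟩
    simp [EuclideanSpace.norm_single]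
  have hf : Continuous fun y : EuclideanSpace ℂ (Fin n) => ‖Matrix.toEuclideanLin M y‖ :=
    ((Matrix.toEuclideanLin M).continuous_of_finiteDimensional).norm
  obtain ⟨x₀, hx₀, hmin⟩ := (isCompact_sphere (0 : EuclideanSpace ℂ (Fin n)) 1).exists_isMinOn
    hne hf.continuousOn
  have hx₀n : ‖x₀‖ = 1 := by simpa using hx₀
  refine ⟨(WithLp.equiv 2 (Fin n → ℂ)) x₀, by exact hx₀n, ?_⟩
  have heq : IsLeast { r | ∃ x : EuclideanSpace ℂ (Fin n), ‖x‖ = 1 ∧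
      r = ‖Matrix.toEuclideanLin M x‖ } ‖Matrix.toEuclideanLin M x₀‖ := by
    constructor
    · exact ⟨x₀, hx₀n, rfl⟩
    · rintro r ⟨y, hy, rfl⟩
      exact hmin (by simpa using hy)
  have : smin M = ‖Matrix.toEuclideanLin M x₀‖ := heq.csInf_eq
  rw [this]; rfl

lemma vecMulVec_mulVec' (u v y : Fin n → ℂ) :
    (vecMulVec u v).mulVec y = (v ⬝ᵥ y) • u := by
  funext i
  simp [vecMulVec, mulVec, dotProduct, Finset.mul_sum, mul_comm, mul_assoc, mul_left_comm]

lemma vecMulVec_conjT (u v : Fin n → ℂ) :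
    (vecMulVec u v)ᴴ = vecMulVec (star v) (star u) := by
  ext i j
  simp [conjTranspose_apply, vecMulVec, mul_comm]

lemma dot_self_eq (x : Fin n → ℂ) : star x ⬝ᵥ x = (‖eu x‖ : ℂ) ^ 2 := by
  rw [← inner_eq_dot]
  exact inner_self_eq_norm_sq_to_K _

lemma norm_smul_add_smul (p q : ℂ) (X W : Fin n → ℂ) (hXW : star X ⬝ᵥ W = 0) :
    ‖eu (p • X + q • W)‖ ^ 2 = ‖p‖ ^ 2 * ‖eu X‖ ^ 2 + ‖q‖ ^ 2 * ‖eu W‖ ^ 2 := by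
  have h1 : eu (p • X + q • W) = p • eu X + q • eu W := rfl
  have h2 : @inner ℂ _ _ (p • eu X) (q • eu W) = 0 := by
    rw [inner_smul_left, inner_smul_right, inner_eq_dot, hXW]
    ring
  rw [h1, norm_add_sq (𝕜 := ℂ), h2]
  simp [norm_smul, mul_pow]

lemma bessel_two (X W V : Fin n → ℂ) (hX : ‖eu X‖ = 1) (hXW : star X ⬝ᵥ W = 0)
    (hs2 : 0 < ‖eu W‖ ^ 2) :
    ‖star X ⬝ᵥ V‖ ^ 2 + ‖star W ⬝ᵥ V‖ ^ 2 / ‖eu W‖ ^ 2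
      ≤ ‖eu V‖ ^ 2 := by
  set a := star X ⬝ᵥ V with ha
  set b := star W ⬝ᵥ V with hb
  set s2 := ‖eu W‖ ^ 2 with hs2def
  set K : ℝ := ‖a‖ ^ 2 + ‖b‖ ^ 2 / s2 with hK
  set β : ℂ := b / (s2 : ℂ) with hβ
  set u : Fin n → ℂ := a • X + β • W with hu
  have hWX : star W ⬝ᵥ X = 0 := by
    rw [star_dotProduct, hXW, star_zero]
  have habs : ∀ z : ℂ, (starRingEnd ℂ) z * z = (‖z‖ ^ 2 : ℝ) := by
    intro z
    rw [mul_comm, Complex.mul_conj, Complex.sq_norm]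
  have hβabs : ‖β‖ ^ 2 = ‖b‖ ^ 2 / s2 ^ 2 := by
    rw [hβ, norm_div, Complex.norm_real, Real.norm_eq_abs, abs_of_pos hs2, div_pow]
  have huV : star u ⬝ᵥ V = (K : ℂ) := by
    rw [hu, star_add, star_smul, star_smul, add_dotProduct, smul_dotProduct, smul_dotProduct]
    simp only [Complex.star_def, smul_eq_mul, ← ha, ← hb]
    have : (starRingEnd ℂ) β * b = (‖b‖ ^ 2 / s2 : ℝ) := by
      rw [hβ, map_div₀, Complex.conj_ofReal, div_mul_eq_mul_div, mul_comm,
        Complex.mul_conj, Complex.sq_norm]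
      push_cast
      ring
    rw [habs a, this, hK]
    push_cast
    ring
  have hun : ‖eu u‖ ^ 2 = K := by
    rw [hu, norm_smul_add_smul a β X W hXW, hX, hβabs, hK]
    field_simp
    ring
  have h0 : (0:ℝ) ≤ ‖eu V - eu u‖ ^ 2 := sq_nonneg _
  have hsub : eu V - eu u = eu (V - u) := rfl
  have hVu : @inner ℂ _ _ (eu V) (eu u) = (K : ℂ) := by
    rw [← inner_conj_symm, inner_eq_dot, huV, Complex.conj_ofReal]
  have hexp := norm_sub_sq (𝕜 := ℂ) (eu V) (eu u)
  rw [hVu, hun] at hexp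
  simp only [RCLike.re_to_complex, Complex.ofReal_re] at hexp
  nlinarith [h0, hexp]

lemma norm_eu_smul (p : ℂ) (y : Fin n → ℂ) : ‖eu (p • y)‖ = ‖p‖ * ‖eu y‖ := by
  have : eu (p • y) = p • eu y := rfl
  rw [this, norm_smul]

lemma abs_dot_le (x v : Fin n → ℂ) : ‖star x ⬝ᵥ v‖ ≤ ‖eu x‖ * ‖eu v‖ := by
  rw [← inner_eq_dot]
  exact norm_inner_le_norm (𝕜 := ℂ) _ _

lemma exists_herm_pert (x r : Fin n → ℂ) (hx : ‖eu x‖ = 1)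
    (hreal : star (star x ⬝ᵥ r) = star x ⬝ᵥ r) :
    ∃ G : Matrix (Fin n) (Fin n) ℂ, G.IsHermitian ∧ specNorm G ≤ ‖eu r‖ ∧
      G.mulVec x = -r := by
  set cC : ℂ := star x ⬝ᵥ r with hcC
  have hcreal : cC = ((cC.re : ℝ) : ℂ) := by
    have him : cC.im = 0 := by
      have h := congrArg Complex.im hreal
      simp only [Complex.star_def, Complex.conj_im] at h
      linarith
    exact Complex.ext (by simp) (by simp [him])
  set c : ℝ := cC.re with hc
  have hxx : star x ⬝ᵥ x = 1 := by
    rw [dot_self_eq, hx]; norm_num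
  set w : Fin n → ℂ := r - cC • x with hw
  have hr : r = cC • x + w := by rw [hw]; abel
  have hxw : star x ⬝ᵥ w = 0 := by
    rw [hw, dotProduct_sub, dotProduct_smul, hxx, ← hcC, smul_eq_mul, mul_one, sub_self]
  have hwx : star w ⬝ᵥ x = 0 := by rw [star_dotProduct, hxw, star_zero]
  have hstar_r : star r = cC • star x + star w := by
    rw [hr, star_add, star_smul]
    congr 1
    rw [hcreal]
    simp [Complex.star_def, Complex.conj_ofReal]
  by_cases hw0 : w = 0
  · -- r = cC • x
    have hrx : r = cC • x := by rw [hr, hw0, add_zero]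
    refine ⟨(-cC) • vecMulVec x (star x), ?_, ?_, ?_⟩
    · unfold Matrix.IsHermitian
      rw [conjTranspose_smul, vecMulVec_conjT, star_star]
      congr 1
      rw [hcreal]
      simp [Complex.star_def, Complex.conj_ofReal]
    · apply specNorm_le_bound _ _ (norm_nonneg _)
      intro v
      rw [smul_mulVec, vecMulVec_mulVec']
      have h1 : (-cC) • (star x ⬝ᵥ v) • x = ((-cC) * (star x ⬝ᵥ v)) • x := smul_smul _ _ _
      rw [h1, norm_eu_smul, hx, mul_one]
      have h2 := abs_dot_le x v
      rw [hx, one_mul] at h2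
      have h3 : ‖eu r‖ = ‖cC‖ := by rw [hrx, norm_eu_smul, hx, mul_one]
      rw [h3]
      calc ‖-cC * (star x ⬝ᵥ v)‖
          = ‖cC‖ * ‖star x ⬝ᵥ v‖ := by
            rw [neg_mul, norm_neg, norm_mul]
        _ ≤ ‖cC‖ * ‖eu v‖ :=
            mul_le_mul_of_nonneg_left h2 (norm_nonneg _)
    · rw [smul_mulVec, vecMulVec_mulVec', hxx, one_smul, hrx, neg_smul]
  · -- w ≠ 0
    have heuw0 : eu w ≠ 0 := fun h => hw0 (by simpa using congrArg (WithLp.equiv 2 (Fin n → ℂ)) h)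
    set s2 : ℝ := ‖eu w‖ ^ 2 with hs2
    have heuwpos : 0 < ‖eu w‖ := norm_pos_iff.mpr heuw0
    have hs2pos : 0 < s2 := by positivity
    have hww : star w ⬝ᵥ w = (s2 : ℂ) := by rw [dot_self_eq, hs2]; norm_num
    set κ : ℂ := ((c / s2 : ℝ) : ℂ) with hκ
    set G : Matrix (Fin n) (Fin n) ℂ :=
      cC • vecMulVec x (star x) + κ • vecMulVec w (star w)
        - vecMulVec r (star x) - vecMulVec x (star r) with hG
    have hsrv : ∀ v : Fin n → ℂ, star r ⬝ᵥ v = cC * (star x ⬝ᵥ v) + star w ⬝ᵥ v := by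
      intro v
      rw [hstar_r, add_dotProduct, smul_dotProduct, smul_eq_mul]
    have hGv : ∀ v : Fin n → ℂ, G.mulVec v =
        (-(cC * (star x ⬝ᵥ v) + star w ⬝ᵥ v)) • x
          + (κ * (star w ⬝ᵥ v) - (star x ⬝ᵥ v)) • w := by
      intro v
      rw [hG, Matrix.sub_mulVec, Matrix.sub_mulVec, Matrix.add_mulVec,
        smul_mulVec, smul_mulVec, vecMulVec_mulVec', vecMulVec_mulVec',
        vecMulVec_mulVec', vecMulVec_mulVec', hsrv v]
      rw [hr]
      module
    refine ⟨G, ?_, ?_, ?_⟩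
    · unfold Matrix.IsHermitian
      rw [hG, conjTranspose_sub, conjTranspose_sub, conjTranspose_add,
        conjTranspose_smul, conjTranspose_smul, vecMulVec_conjT, vecMulVec_conjT,
        vecMulVec_conjT, vecMulVec_conjT]
      simp only [star_star]
      have h1 : star cC = cC := by rw [hcreal]; simp [Complex.star_def, Complex.conj_ofReal]
      have h2 : star κ = κ := by rw [hκ]; simp [Complex.star_def, Complex.conj_ofReal]
      rw [h1, h2]
      abel
    · -- norm bound
      apply specNorm_le_bound _ _ (norm_nonneg _)
      intro v
      set a : ℂ := star x ⬝ᵥ v with ha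
      set b : ℂ := star w ⬝ᵥ v with hb
      rw [hGv v, ← ha, ← hb]
      have hnorm2 : ‖eu ((-(cC * a + b)) • x + (κ * b - a) • w)‖ ^ 2
          = ‖-(cC * a + b)‖ ^ 2 * 1 + ‖κ * b - a‖ ^ 2 * s2 := by
        rw [norm_smul_add_smul _ _ _ _ hxw, hx, ← hs2]; norm_num
      have hbessel := bessel_two x w v hx hxw (by rw [← hs2]; exact hs2pos)
      rw [← ha, ← hb, ← hs2] at hbessel
      have hrnorm : ‖eu r‖ ^ 2 = c ^ 2 + s2 := by
        have := norm_smul_add_smul cC 1 x w hxw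
        rw [one_smul, ← hr, hx, ← hs2] at this
        rw [this, hcreal]
        simp [Complex.norm_real, sq_abs]
      have habs1 : ‖-(cC * a + b)‖ ^ 2
          = (c * a.re + b.re) ^ 2 + (c * a.im + b.im) ^ 2 := by
        rw [norm_neg, Complex.sq_norm, Complex.normSq_apply]
        rw [hcreal]
        simp [Complex.add_re, Complex.add_im, Complex.mul_re, Complex.mul_im,
          Complex.ofReal_re, Complex.ofReal_im]
        ring
      have habs2 : ‖κ * b - a‖ ^ 2
          = (c / s2 * b.re - a.re) ^ 2 + (c / s2 * b.im - a.im) ^ 2 := by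
        rw [Complex.sq_norm, Complex.normSq_apply, hκ]
        simp [Complex.sub_re, Complex.sub_im, Complex.mul_re, Complex.mul_im,
          Complex.ofReal_re, Complex.ofReal_im]
        ring
      have haabs : ‖a‖ ^ 2 = a.re ^ 2 + a.im ^ 2 := by
        rw [Complex.sq_norm, Complex.normSq_apply]; ring
      have hbabs : ‖b‖ ^ 2 = b.re ^ 2 + b.im ^ 2 := by
        rw [Complex.sq_norm, Complex.normSq_apply]; ring
      have hkey : ‖eu ((-(cC * a + b)) • x + (κ * b - a) • w)‖ ^ 2
          = (c ^ 2 + s2) * (‖a‖ ^ 2 + ‖b‖ ^ 2 / s2) := by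
        rw [hnorm2, habs1, habs2, haabs, hbabs]
        field_simp
        ring
      have hfinal : ‖eu ((-(cC * a + b)) • x + (κ * b - a) • w)‖ ^ 2
          ≤ (‖eu r‖ * ‖eu v‖) ^ 2 := by
        rw [hkey, mul_pow, hrnorm]
        have hc2 : (0:ℝ) ≤ c ^ 2 + s2 := by positivity
        exact mul_le_mul_of_nonneg_left hbessel hc2
      have h1 : (0:ℝ) ≤ ‖eu ((-(cC * a + b)) • x + (κ * b - a) • w)‖ := norm_nonneg _
      have h2 : (0:ℝ) ≤ ‖eu r‖ * ‖eu v‖ := by positivity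
      nlinarith [hfinal, h1, h2]
    · rw [hGv x, hwx, hxx, mul_one, add_zero, mul_zero, zero_sub, hr]
      module

lemma specNorm_smul (c : ℂ) (M : Matrix (Fin n) (Fin n) ℂ) :
    specNorm (c • M) = ‖c‖ * specNorm M := by
  unfold specNorm
  rw [_root_.map_smul, _root_.map_smul]
  rw [norm_smul c (LinearMap.toContinuousLinearMap (toEuclideanLin M))]

lemma herm_real_smul (c : ℝ) {G : Matrix (Fin n) (Fin n) ℂ} (hG : G.IsHermitian) :
    ((c : ℂ) • G).IsHermitian := by
  unfold Matrix.IsHermitian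
  rw [conjTranspose_smul, hG.eq]
  congr 1
  simp [Complex.star_def, Complex.conj_ofReal]

lemma specNorm_nonneg (M : Matrix (Fin n) (Fin n) ℂ) : 0 ≤ specNorm M :=
  norm_nonneg _

lemma im_zero_of_star {w : ℂ} (h : star w = w) : w.im = 0 := by
  have := congrArg Complex.im h
  simp only [Complex.star_def, Complex.conj_im] at this
  linarith

set_option maxHeartbeats 1000000 in

theorem symPseudo_characterization {n : ℕ} (hn : 0 < n) (A B : Matrix (Fin n) (Fin n) ℂ)
    (hA : A.IsHermitian) (hB : B.IsHermitian)
    (ε : ℝ) (hε : 0 < ε) (hεγ : ε < crawford A B) (z : ℂ) :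
    z ∈ symPseudo ε A B ↔
      z.im = 0 ∧ smin (A - z • B) ≤ ε * Real.sqrt (1 + ‖z‖ ^ 2) := by
  constructor
  · rintro ⟨E, F, hE, hF, hEF, u, hu, heq⟩
    have hEF2 : specNorm E ^ 2 + specNorm F ^ 2 ≤ ε ^ 2 := by
      have h0 : (0:ℝ) ≤ specNorm E ^ 2 + specNorm F ^ 2 := by positivity
      nlinarith [Real.sq_sqrt h0, Real.sqrt_nonneg (specNorm E ^ 2 + specNorm F ^ 2)]
    have heuu : eu u ≠ 0 := fun h => hu (by simpa using congrArg (WithLp.equiv 2 (Fin n → ℂ)) h)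
    have hnu : 0 < ‖eu u‖ := norm_pos_iff.mpr heuu
    set xh : Fin n → ℂ := ((‖eu u‖ : ℝ) : ℂ)⁻¹ • u with hxh
    have hxh1 : ‖eu xh‖ = 1 := by
      rw [hxh, norm_eu_smul, norm_inv, Complex.norm_real, Real.norm_eq_abs, abs_of_pos hnu]
      field_simp
    have heq2 : (A + E).mulVec xh = z • (B + F).mulVec xh := by
      rw [hxh, mulVec_smul, mulVec_smul, heq, smul_comm]
    set dA : ℂ := star xh ⬝ᵥ A.mulVec xh with hdA
    set dB : ℂ := star xh ⬝ᵥ B.mulVec xh with hdB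
    set pE : ℂ := star xh ⬝ᵥ E.mulVec xh with hpE
    set qF : ℂ := star xh ⬝ᵥ F.mulVec xh with hqF
    set α : ℂ := star xh ⬝ᵥ (A + E).mulVec xh with hα
    set β : ℂ := star xh ⬝ᵥ (B + F).mulVec xh with hβ
    have hsplitA : α = dA + pE := by rw [hα, Matrix.add_mulVec, dotProduct_add]
    have hsplitB : β = dB + qF := by rw [hβ, Matrix.add_mulVec, dotProduct_add]
    have hαβ : α = z * β := by rw [hα, heq2, dotProduct_smul, smul_eq_mul]
    have hαim : α.im = 0 := im_zero_of_star (herm_quad_real (hA.add hE) xh)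
    have hβim : β.im = 0 := im_zero_of_star (herm_quad_real (hB.add hF) xh)
    have hpEim : pE.im = 0 := im_zero_of_star (herm_quad_real hE xh)
    have hqFim : qF.im = 0 := im_zero_of_star (herm_quad_real hF xh)
    have hcr : crawford A B ≤ ‖star xh ⬝ᵥ (A + Complex.I • B).mulVec xh‖ :=
      crawford_le A B xh hxh1
    have hsplitC : star xh ⬝ᵥ (A + Complex.I • B).mulVec xh
        = (α + Complex.I * β) - (pE + Complex.I * qF) := by
      rw [Matrix.add_mulVec, dotProduct_add, smul_mulVec, dotProduct_smul, smul_eq_mul,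
        ← hdA, ← hdB, hsplitA, hsplitB]
      ring
    have hpEabs : ‖pE‖ ≤ specNorm E := quad_abs_le E xh hxh1
    have hqFabs : ‖qF‖ ≤ specNorm F := quad_abs_le F xh hxh1
    have hpE2 : ‖pE‖ ^ 2 = pE.re ^ 2 := by
      rw [Complex.sq_norm, Complex.normSq_apply, hpEim]; ring
    have hqF2 : ‖qF‖ ^ 2 = qF.re ^ 2 := by
      rw [Complex.sq_norm, Complex.normSq_apply, hqFim]; ring
    have hδ2 : ‖pE + Complex.I * qF‖ ^ 2 = pE.re ^ 2 + qF.re ^ 2 := by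
      rw [Complex.sq_norm, Complex.normSq_apply]
      simp [Complex.add_re, Complex.add_im, Complex.mul_re, Complex.mul_im,
        Complex.I_re, Complex.I_im, hpEim, hqFim]
      ring
    have hδ : ‖pE + Complex.I * qF‖ ≤ ε := by
      nlinarith [norm_nonneg (pE + Complex.I * qF), norm_nonneg pE,
        norm_nonneg qF, hpEabs, hqFabs, hpE2, hqF2, hδ2, hEF2,
        specNorm_nonneg E, specNorm_nonneg F, hε.le]
    have htri : ‖(α + Complex.I * β) - (pE + Complex.I * qF)‖
        ≤ ‖α + Complex.I * β‖ + ‖pE + Complex.I * qF‖ := by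
      rw [sub_eq_add_neg]
      refine le_trans (norm_add_le _ _) ?_
      rw [norm_neg]
    have hbig : crawford A B - ε ≤ ‖α + Complex.I * β‖ := by
      rw [hsplitC] at hcr
      linarith
    have hne : α + Complex.I * β ≠ 0 := by
      intro h
      rw [h, norm_zero] at hbig
      linarith
    have hβne : β ≠ 0 := by
      intro h
      apply hne
      rw [hαβ, h]
      simp
    have hβre : β.re ≠ 0 := fun h => hβne (Complex.ext h hβim)
    have hzim : z.im = 0 := by
      have h1 : α.im = z.re * β.im + z.im * β.re := by rw [hαβ, Complex.mul_im]
      rw [hαim, hβim, mul_zero, zero_add] at h1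
      rcases mul_eq_zero.mp h1.symm with h | h
      · exact h
      · exact absurd h hβre
    refine ⟨hzim, ?_⟩
    -- residual bound
    have hres : (A - z • B).mulVec xh = -(E.mulVec xh - z • F.mulVec xh) := by
      have h := heq2
      rw [Matrix.add_mulVec, Matrix.add_mulVec, smul_add] at h
      rw [Matrix.sub_mulVec, smul_mulVec]
      have hAx : A.mulVec xh = z • B.mulVec xh + z • F.mulVec xh - E.mulVec xh := by
        rw [← h]; abel
      rw [hAx]; abel
    have hsle : smin (A - z • B) ≤ ‖eu ((A - z • B).mulVec xh)‖ :=
      smin_le _ xh hxh1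
    have hresn : ‖eu ((A - z • B).mulVec xh)‖ ≤ specNorm E + ‖z‖ * specNorm F := by
      rw [hres]
      have h1 : eu (-(E.mulVec xh - z • F.mulVec xh))
          = -(eu (E.mulVec xh) - eu (z • F.mulVec xh)) := rfl
      rw [h1, norm_neg]
      calc ‖eu (E.mulVec xh) - eu (z • F.mulVec xh)‖
          ≤ ‖eu (E.mulVec xh)‖ + ‖eu (z • F.mulVec xh)‖ := norm_sub_le _ _
        _ ≤ specNorm E + ‖z‖ * specNorm F := by
            have h2 := mulVec_norm_le E xh
            have h3 := mulVec_norm_le F xh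
            rw [show ‖(WithLp.equiv 2 (Fin n → ℂ)).symm xh‖ = (1:ℝ) from hxh1, mul_one] at h2 h3
            have h4 : ‖eu (z • F.mulVec xh)‖ = ‖z‖ * ‖eu (F.mulVec xh)‖ :=
              norm_eu_smul z _
            rw [h4]
            have := mul_le_mul_of_nonneg_left h3 (norm_nonneg z)
            exact add_le_add h2 this
    have hfinal : specNorm E + ‖z‖ * specNorm F
        ≤ ε * Real.sqrt (1 + ‖z‖ ^ 2) := by
      set e := specNorm E
      set f := specNorm F
      set t := ‖z‖
      set R := Real.sqrt (e ^ 2 + f ^ 2) with hR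
      set S := Real.sqrt (1 + t ^ 2) with hS
      have hR2 : R ^ 2 = e ^ 2 + f ^ 2 := Real.sq_sqrt (by positivity)
      have hS2 : S ^ 2 = 1 + t ^ 2 := Real.sq_sqrt (by positivity)
      have hRn : 0 ≤ R := Real.sqrt_nonneg _
      have hSn : 0 ≤ S := Real.sqrt_nonneg _
      have hRε : R ≤ ε := hEF
      have hen : 0 ≤ e := specNorm_nonneg E
      have hfn : 0 ≤ f := specNorm_nonneg F
      have htn : 0 ≤ t := norm_nonneg z
      have h1 : (e + t * f) ^ 2 ≤ (R * S) ^ 2 := by nlinarith [sq_nonneg (e * t - f)]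
      have h2 : e + t * f ≤ R * S := by nlinarith [mul_nonneg hRn hSn]
      calc e + t * f ≤ R * S := h2
        _ ≤ ε * S := mul_le_mul_of_nonneg_right hRε hSn
    linarith
  · rintro ⟨him, hsmin⟩
    set lam : ℝ := z.re with hlam
    have hz : z = ((lam : ℝ) : ℂ) := Complex.ext rfl (by simp [him])
    have habsz : ‖z‖ ^ 2 = lam ^ 2 := by
      rw [Complex.sq_norm, Complex.normSq_apply, him]; ring
    obtain ⟨x, hx1, hxmin⟩ := smin_exists hn (A - z • B)
    set r : Fin n → ℂ := (A - z • B).mulVec x with hrdef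
    have hM : (A - z • B).IsHermitian := by
      unfold Matrix.IsHermitian
      rw [conjTranspose_sub, conjTranspose_smul, hA.eq, hB.eq]
      congr 1
      rw [hz]
      simp [Complex.star_def, Complex.conj_ofReal]
    have hreal : star (star x ⬝ᵥ r) = star x ⬝ᵥ r := herm_quad_real hM x
    obtain ⟨G, hGherm, hGnorm, hGx⟩ := exists_herm_pert x r hx1 hreal
    have hGε : specNorm G ≤ ε * Real.sqrt (1 + ‖z‖ ^ 2) := by
      calc specNorm G ≤ ‖eu r‖ := hGnorm
        _ = smin (A - z • B) := hxmin
        _ ≤ _ := hsmin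
    set t : ℝ := (1 + ‖z‖ ^ 2)⁻¹ with ht
    have htpos : 0 < t := by rw [ht]; positivity
    set fc : ℝ := -(lam * t) with hfc
    refine ⟨((t : ℝ) : ℂ) • G, ((fc : ℝ) : ℂ) • G, herm_real_smul t hGherm,
      herm_real_smul fc hGherm, ?_, x, ?_, ?_⟩
    · -- norm bound
      rw [specNorm_smul, specNorm_smul, Complex.norm_real, Complex.norm_real, Real.norm_eq_abs, Real.norm_eq_abs]
      have hs : Real.sqrt (1 + ‖z‖ ^ 2) ^ 2 = 1 + ‖z‖ ^ 2 :=
        Real.sq_sqrt (by positivity)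
      have hG2 : specNorm G ^ 2 ≤ ε ^ 2 * (1 + lam ^ 2) := by
        rw [← habsz]
        nlinarith [hGε, specNorm_nonneg G, Real.sqrt_nonneg (1 + ‖z‖ ^ 2), hs]
      have htt : t * (1 + lam ^ 2) = 1 := by
        rw [ht, habsz]
        field_simp
      have hsum : (|t| * specNorm G) ^ 2 + (|fc| * specNorm G) ^ 2
          = t * (t * (1 + lam ^ 2) * specNorm G ^ 2) := by
        rw [hfc, abs_of_pos htpos, abs_neg, abs_mul, abs_of_pos htpos]
        have habs2 : |lam| ^ 2 = lam ^ 2 := sq_abs lam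
        nlinarith [habs2]
      rw [hsum, htt, one_mul]
      have hb : t * specNorm G ^ 2 ≤ ε ^ 2 := by
        calc t * specNorm G ^ 2 ≤ t * (ε ^ 2 * (1 + lam ^ 2)) :=
              mul_le_mul_of_nonneg_left hG2 htpos.le
          _ = ε ^ 2 * (t * (1 + lam ^ 2)) := by ring
          _ = ε ^ 2 := by rw [htt, mul_one]
      calc Real.sqrt (t * specNorm G ^ 2) ≤ Real.sqrt (ε ^ 2) := Real.sqrt_le_sqrt hb
        _ = ε := Real.sqrt_sq hε.le
    · -- x ≠ 0
      intro h
      rw [h] at hx1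
      simp [eu] at hx1
    · -- eigen equation
      have hscal : ((t : ℝ) : ℂ) - z * ((fc : ℝ) : ℂ) = 1 := by
        rw [hfc, ht, habsz]
        push_cast
        have : (1 : ℂ) + (lam:ℂ) ^ 2 ≠ 0 := by
          have h0 : ((1 + lam ^ 2 : ℝ) : ℂ) ≠ 0 := by
            rw [Ne, Complex.ofReal_eq_zero]
            nlinarith [sq_nonneg lam]
          simpa using h0
        field_simp
        rw [hz]
        ring
      have hr' : A.mulVec x - z • B.mulVec x = r := by
        rw [hrdef, Matrix.sub_mulVec, smul_mulVec]
      have h1 : (((t : ℝ) : ℂ) • G).mulVec x - z • ((((fc : ℝ) : ℂ) • G).mulVec x)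
          = -r := by
        rw [smul_mulVec, smul_mulVec, hGx]
        have : ((t : ℝ) : ℂ) • (-r) - z • (((fc : ℝ) : ℂ) • (-r))
            = (((t : ℝ) : ℂ) - z * ((fc : ℝ) : ℂ)) • (-r) := by module
        rw [this, hscal, one_smul]
      have hA' : A.mulVec x = r + z • B.mulVec x := by rw [← hr']; abel
      have hE' : (((t : ℝ) : ℂ) • G).mulVec x
          = -r + z • ((((fc : ℝ) : ℂ) • G).mulVec x) := by rw [← h1]; abel
      rw [Matrix.add_mulVec, Matrix.add_mulVec, smul_add, hA', hE']
      abel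

end AuxLemmas
end

section
/- Let (A,B) be an n×n definite pencil with eigenvalues λ₁,…,λₙ and ε < min{σₙ(B), γ(A,B)}. For each i let rᵢ = 1/||B||₂ if A = 0 and rᵢ = max{1/||B||₂, |λᵢ|/||A||₂} otherwise. Then the union of open intervals (λᵢ − εrᵢ, λᵢ + εrᵢ) is contained in Λ_ε^sym(A,B). -/
open Matrix MeasureTheory ProbabilityTheory
open scoped Classical

lemma specNorm_nonneg_s7 {m n : Type*} [Fintype m] [Fintype n] [DecidableEq n]
    (A : Matrix m n ℂ) : 0 ≤ specNorm A := norm_nonneg _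

lemma specNorm_zero {n : ℕ} : specNorm (0 : Matrix (Fin n) (Fin n) ℂ) = 0 := by
  unfold specNorm
  rw [show Matrix.toEuclideanLin (0 : Matrix (Fin n) (Fin n) ℂ) = 0 from LinearEquiv.map_zero _,
    show LinearMap.toContinuousLinearMap (0 : (EuclideanSpace ℂ (Fin n)) →ₗ[ℂ]
      EuclideanSpace ℂ (Fin n)) = 0 from LinearEquiv.map_zero _, norm_zero]

set_option synthInstance.maxHeartbeats 1000000 in
lemma clm_norm_smul {n : ℕ} (c : ℂ)
    (L : EuclideanSpace ℂ (Fin n) →L[ℂ] EuclideanSpace ℂ (Fin n)) :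
    ‖c • L‖ = ‖c‖ * ‖L‖ := by
  rcases eq_or_ne c 0 with rfl | hc
  · have h0 : (0 : ℂ) • L = 0 := by ext x; simp
    rw [h0, norm_zero, norm_zero, zero_mul]
  · refine le_antisymm (ContinuousLinearMap.opNorm_smul_le c L) ?_
    have key : c⁻¹ • (c • L) = L := by ext x; simp [smul_smul, inv_mul_cancel₀ hc]
    have hcn : ‖c‖ ≠ 0 := norm_ne_zero_iff.mpr hc
    calc ‖c‖ * ‖L‖ = ‖c‖ * ‖c⁻¹ • (c • L)‖ := by rw [key]
      _ ≤ ‖c‖ * (‖c⁻¹‖ * ‖c • L‖) :=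
          mul_le_mul_of_nonneg_left (ContinuousLinearMap.opNorm_smul_le _ _) (norm_nonneg _)
      _ = ‖c • L‖ := by
          rw [norm_inv, ← mul_assoc, mul_inv_cancel₀ hcn, one_mul]

lemma specNorm_real_smul {n : ℕ} (τ : ℝ) (M : Matrix (Fin n) (Fin n) ℂ) :
    specNorm ((τ : ℂ) • M) = |τ| * specNorm M := by
  unfold specNorm
  have h2 : LinearMap.toContinuousLinearMap (Matrix.toEuclideanLin ((τ:ℂ) • M))
      = (τ:ℂ) • LinearMap.toContinuousLinearMap (Matrix.toEuclideanLin M) := by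
    ext x
    simp [Matrix.toEuclideanLin, Matrix.smul_mulVec]
  rw [h2, clm_norm_smul, Complex.norm_real, Real.norm_eq_abs]

lemma isHermitian_real_smul {n : ℕ} (τ : ℝ) {M : Matrix (Fin n) (Fin n) ℂ}
    (hM : M.IsHermitian) : ((τ : ℂ) • M).IsHermitian := by
  unfold Matrix.IsHermitian at *
  rw [Matrix.conjTranspose_smul, hM, Complex.star_def, Complex.conj_ofReal]

lemma mem_symPseudo_of {n : ℕ} (ε : ℝ) (A B E : Matrix (Fin n) (Fin n) ℂ)
    (hE : E.IsHermitian) (hbound : specNorm E ≤ ε) (z : ℂ) (u : Fin n → ℂ)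
    (hu : u ≠ 0) (heq : (A + E).mulVec u = z • B.mulVec u) :
    z ∈ symPseudo ε A B := by
  refine ⟨E, 0, hE, Matrix.isHermitian_zero, ?_, u, hu, by simpa using heq⟩
  rw [specNorm_zero]
  simpa [Real.sqrt_sq_eq_abs, abs_of_nonneg (specNorm_nonneg_s7 E)] using hbound

theorem definite_bauer_fike_lower {n : ℕ} (A B : Matrix (Fin n) (Fin n) ℂ)
    (hA : A.IsHermitian) (hB : B.IsHermitian) (hdef : 0 < crawford A B)
    (lam : Fin n → ℝ)
    (heig : ∀ i, lam i ∈ pencilEigs A B)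
    (hcover : ∀ t ∈ pencilEigs A B, ∃ i, lam i = t)
    (ε : ℝ) (hε : 0 < ε) (hεB : ε < smin B) (hεγ : ε < crawford A B) :
    ∀ i : Fin n, ∀ t : ℝ,
      |t - lam i| < ε * (if A = 0 then (specNorm B)⁻¹
        else max (specNorm B)⁻¹ (|lam i| / specNorm A)) →
      (t : ℂ) ∈ symPseudo ε A B := by
  intro i t h
  obtain ⟨u, hu, hAu⟩ := heig i
  set l : ℝ := lam i with hl
  -- shift construction
  have shift : |t - l| * specNorm B ≤ ε → (t : ℂ) ∈ symPseudo ε A B := by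
    intro hb
    refine mem_symPseudo_of ε A B (((t - l : ℝ) : ℂ) • B)
      (isHermitian_real_smul _ hB) ?_ _ u hu ?_
    · rw [specNorm_real_smul]; exact hb
    · rw [Matrix.add_mulVec, hAu, Matrix.smul_mulVec]
      rw [← add_smul]
      norm_num
  -- scale construction
  have scale : l ≠ 0 → |t - l| / |l| * specNorm A ≤ ε → (t : ℂ) ∈ symPseudo ε A B := by
    intro hl0 hb
    refine mem_symPseudo_of ε A B ((((t - l) / l : ℝ) : ℂ) • A)
      (isHermitian_real_smul _ hA) ?_ _ u hu ?_
    · rw [specNorm_real_smul, abs_div]; exact hb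
    · rw [Matrix.add_mulVec, Matrix.smul_mulVec, hAu, smul_smul, ← add_smul]
      congr 1
      have hlC : (l : ℂ) ≠ 0 := Complex.ofReal_ne_zero.mpr hl0
      push_cast
      field_simp
      ring
  have habs : 0 ≤ |t - l| := abs_nonneg _
  -- bound from inverse of specNorm B
  have hBcase : |t - l| < ε * (specNorm B)⁻¹ → (t : ℂ) ∈ symPseudo ε A B := by
    intro hlt
    apply shift
    rcases eq_or_lt_of_le (specNorm_nonneg_s7 B) with hB0 | hBpos
    · rw [← hB0, mul_zero]; exact le_of_lt hε
    · have := mul_lt_mul_of_pos_right hlt hBpos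
      rw [mul_assoc, inv_mul_cancel₀ (ne_of_gt hBpos), mul_one] at this
      exact le_of_lt this
  have hAcase : |t - l| < ε * (|l| / specNorm A) → (t : ℂ) ∈ symPseudo ε A B := by
    intro hlt
    have hl0 : l ≠ 0 := by
      intro h0
      have hz : ε * (|(0:ℝ)| / specNorm A) = 0 := by simp
      rw [h0, hz] at hlt
      exact absurd hlt (not_lt.mpr (abs_nonneg _))
    apply scale hl0
    have hlpos : 0 < |l| := abs_pos.mpr hl0
    rcases eq_or_lt_of_le (specNorm_nonneg_s7 A) with hA0 | hApos
    · rw [← hA0, mul_zero]; exact le_of_lt hε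
    · rw [div_mul_eq_mul_div, div_le_iff₀ hlpos]
      have : |t - l| * specNorm A < ε * (|l| / specNorm A) * specNorm A :=
        mul_lt_mul_of_pos_right hlt hApos
      rw [show ε * (|l| / specNorm A) * specNorm A = ε * |l| by field_simp] at this
      exact le_of_lt this
  by_cases hA0 : A = 0
  · rw [if_pos hA0] at h
    exact hBcase h
  · rw [if_neg hA0, mul_max_of_nonneg _ _ (le_of_lt hε), lt_max_iff] at h
    rcases h with h | h
    · exact hBcase h
    · exact hAcase h
end
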